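/- Let n ≥ 3 be an integer and α > 0. Then ∫_{ℝⁿ} (α/(|x|² + α²))^n dx = ω_n / 2^n, where ω_n = 2π^{(n+1)/2}/Γ((n+1)/2) is the volume of the unit n-dimensional round sphere; in particular the value of the integral is independent of α. Equivalently, ∫_{ℝⁿ} u_α(x)^{2n/(n−2)} dx = 2^{1−n}·π^{(n+1)/2}/Γ((n+1)/2), where u_α(x) = (α/(|x|² + α²))^{(n−2)/2}. -/

import Mathlib

open MeasureTheory

open Real Set in
private lemma bubble_radial_aux (n : ℕ) (hn : 3 ≤ n) :
    ∫ y in Ioi (0:ℝ), y ^ ((n:ℝ) - 1) * (1 + y ^ 2) ^ (-(n:ℝ)) =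
      Real.Gamma ((n:ℝ)/2) ^ 2 / (2 * Real.Gamma n) := by
  have hs : (-1:ℝ) < (n:ℝ) - 1 := by
    have : (0:ℝ) < n := by positivity
    linarith
  have hn2 : (0:ℝ) < (n:ℝ)/2 := by positivity
  have hΓn : 0 < Real.Gamma n := Real.Gamma_pos_of_pos (by positivity)
  have hΓ2 : 0 < Real.Gamma ((n:ℝ)/2) := Real.Gamma_pos_of_pos hn2
  set K : ℝ → ℝ → ℝ := fun y t => y ^ ((n:ℝ)-1) * (t ^ ((n:ℝ)-1) * exp (-(1 + y^2) * t)) with hK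
  have measK : Measurable (Function.uncurry K) := by fun_prop
  -- inner integral over t
  have innerT : ∀ y ∈ Ioi (0:ℝ), ∫⁻ t in Ioi (0:ℝ), ENNReal.ofReal (K y t)
      = ENNReal.ofReal (Real.Gamma n * (y ^ ((n:ℝ)-1) * (1 + y^2) ^ (-(n:ℝ)))) := by
    intro y hy
    have hy' : 0 < y := hy
    have hb : (0:ℝ) < 1 + y^2 := by positivity
    have hint : IntegrableOn (fun t : ℝ => t ^ ((n:ℝ)-1) * exp (-(1 + y^2) * t)) (Ioi 0) := by
      have h := integrableOn_rpow_mul_exp_neg_mul_rpow hs one_pos hb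
      simpa only [rpow_one] using h
    have hintK : IntegrableOn (K y) (Ioi 0) := hint.const_mul _
    rw [← ofReal_integral_eq_lintegral_ofReal hintK
      ((ae_restrict_iff' measurableSet_Ioi).2 (Filter.Eventually.of_forall fun t ht => by
        have ht' : 0 < t := ht; positivity))]
    congr 1
    rw [hK]
    simp only
    rw [MeasureTheory.integral_const_mul]
    have h := integral_rpow_mul_exp_neg_mul_rpow (p := 1) one_pos hs hb
    simp only [rpow_one] at h
    rw [h]
    have h1 : (n:ℝ) - 1 + 1 = (n:ℝ) := by ring
    rw [h1]
    ring_nf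
  -- inner integral over y
  have innerY : ∀ t ∈ Ioi (0:ℝ), ∫⁻ y in Ioi (0:ℝ), ENNReal.ofReal (K y t)
      = ENNReal.ofReal ((Real.Gamma ((n:ℝ)/2) / 2) * (exp (-t) * t ^ ((n:ℝ)/2 - 1))) := by
    intro t ht
    have ht' : 0 < t := ht
    have hre : ∀ y : ℝ, K y t = (t ^ ((n:ℝ)-1) * exp (-t)) * (y ^ ((n:ℝ)-1) * exp (-t * y^2)) := by
      intro y
      rw [hK]
      simp only
      rw [show -(1 + y^2) * t = -t + -(t * y^2) by ring, Real.exp_add]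
      ring
    simp only [hre]
    have hint : IntegrableOn (fun y : ℝ => (t ^ ((n:ℝ)-1) * exp (-t)) * (y ^ ((n:ℝ)-1) * exp (-t * y^2))) (Ioi 0) :=
      (integrableOn_rpow_mul_exp_neg_mul_sq ht' hs).const_mul _
    rw [← ofReal_integral_eq_lintegral_ofReal hint
      ((ae_restrict_iff' measurableSet_Ioi).2 (Filter.Eventually.of_forall fun y hy => by
        have hy' : 0 < y := hy; positivity))]
    congr 1
    rw [MeasureTheory.integral_const_mul]
    have h := integral_rpow_mul_exp_neg_mul_rpow (p := 2) two_pos hs ht'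
    simp only [show ((2:ℝ)) = ((2:ℕ):ℝ) by norm_num, rpow_natCast] at h
    rw [h]
    push_cast at *
    have e1 : t ^ ((n:ℝ)-1) * exp (-t) * (t ^ (-((n:ℝ)-1+1)/2) * (1/2) * Real.Gamma (((n:ℝ)-1+1)/2))
        = (Real.Gamma ((n:ℝ)/2)/2) * (exp (-t) * (t ^ ((n:ℝ)-1) * t ^ (-(n:ℝ)/2))) := by
      rw [show (n:ℝ) - 1 + 1 = (n:ℝ) by ring]
      ring
    rw [e1, ← Real.rpow_add ht']
    ring_nf
  -- Tonelli swap
  have swap : ∫⁻ y in Ioi (0:ℝ), ∫⁻ t in Ioi (0:ℝ), ENNReal.ofReal (K y t)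
      = ∫⁻ t in Ioi (0:ℝ), ∫⁻ y in Ioi (0:ℝ), ENNReal.ofReal (K y t) :=
    lintegral_lintegral_swap (measK.ennreal_ofReal.aemeasurable)
  -- compute RHS of swap
  have hRHS : ∫⁻ t in Ioi (0:ℝ), ∫⁻ y in Ioi (0:ℝ), ENNReal.ofReal (K y t)
      = ENNReal.ofReal (Real.Gamma ((n:ℝ)/2)^2 / 2) := by
    rw [setLIntegral_congr_fun measurableSet_Ioi innerY]
    have hint : IntegrableOn (fun t : ℝ => (Real.Gamma ((n:ℝ)/2)/2) * (exp (-t) * t ^ ((n:ℝ)/2 - 1))) (Ioi 0) :=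
      (Real.GammaIntegral_convergent hn2).const_mul _
    rw [← ofReal_integral_eq_lintegral_ofReal hint
      ((ae_restrict_iff' measurableSet_Ioi).2 (Filter.Eventually.of_forall fun t ht => by
        have ht' : 0 < t := ht; positivity))]
    congr 1
    rw [MeasureTheory.integral_const_mul, ← Real.Gamma_eq_integral hn2]
    ring
  -- compute LHS of swap
  have hLHS : ∫⁻ y in Ioi (0:ℝ), ∫⁻ t in Ioi (0:ℝ), ENNReal.ofReal (K y t)
      = ENNReal.ofReal (Real.Gamma n) *
        ∫⁻ y in Ioi (0:ℝ), ENNReal.ofReal (y ^ ((n:ℝ)-1) * (1 + y^2) ^ (-(n:ℝ))) := by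
    rw [setLIntegral_congr_fun measurableSet_Ioi innerT]
    rw [← lintegral_const_mul' _ _ ENNReal.ofReal_ne_top]
    congr 1 with y
    rw [← ENNReal.ofReal_mul hΓn.le]
  have key : ∫⁻ y in Ioi (0:ℝ), ENNReal.ofReal (y ^ ((n:ℝ)-1) * (1 + y^2) ^ (-(n:ℝ)))
      = ENNReal.ofReal (Real.Gamma ((n:ℝ)/2)^2 / (2 * Real.Gamma n)) := by
    have h := hLHS.symm.trans (swap.trans hRHS)
    have hcancel : ENNReal.ofReal (Real.Gamma n) *
        ENNReal.ofReal (Real.Gamma ((n:ℝ)/2)^2 / (2 * Real.Gamma n))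
        = ENNReal.ofReal (Real.Gamma ((n:ℝ)/2)^2 / 2) := by
      rw [← ENNReal.ofReal_mul hΓn.le]
      congr 1
      field_simp
    have := (ENNReal.mul_right_inj (ENNReal.ofReal_pos.2 hΓn).ne' ENNReal.ofReal_ne_top).mp
      (h.trans hcancel.symm)
    exact this
  -- convert to Bochner integral
  rw [integral_eq_lintegral_of_nonneg_ae
    ((ae_restrict_iff' measurableSet_Ioi).2 (Filter.Eventually.of_forall fun y hy => by
      have hy' : 0 < y := hy; positivity))
    ((by fun_prop : Measurable fun y : ℝ => y ^ ((n:ℝ)-1) * (1 + y ^ 2) ^ (-(n:ℝ))).aestronglyMeasurable)]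
  rw [key, ENNReal.toReal_ofReal (by positivity)]

open Real Set in
private lemma bubble_gamma_algebra (n : ℕ) (hn : 3 ≤ n) :
    (n : ℝ) * ((Real.sqrt π ^ n / Real.Gamma ((n:ℝ)/2 + 1)) *
        (Real.Gamma ((n:ℝ)/2) ^ 2 / (2 * Real.Gamma n)))
      = (2 * Real.pi ^ (((n : ℝ) + 1) / 2) / Real.Gamma (((n : ℝ) + 1) / 2)) / 2 ^ n := by
  have hnR : (0:ℝ) < n := by positivity
  have hn2 : (0:ℝ) < (n:ℝ)/2 := by positivity
  have hG : 0 < Real.Gamma ((n:ℝ)/2) := Real.Gamma_pos_of_pos hn2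
  have hH : 0 < Real.Gamma (((n:ℝ)+1)/2) := Real.Gamma_pos_of_pos (by positivity)
  have hGn : 0 < Real.Gamma n := Real.Gamma_pos_of_pos hnR
  have hsπ : (0:ℝ) < Real.sqrt π := Real.sqrt_pos.2 Real.pi_pos
  have hG1 : Real.Gamma ((n:ℝ)/2 + 1) = ((n:ℝ)/2) * Real.Gamma ((n:ℝ)/2) :=
    Real.Gamma_add_one hn2.ne'
  have hdup := Real.Gamma_mul_Gamma_add_half ((n:ℝ)/2)
  rw [show (n:ℝ)/2 + 1/2 = ((n:ℝ)+1)/2 by ring, show 2 * ((n:ℝ)/2) = (n:ℝ) by ring] at hdup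
  have h2n : (2:ℝ) ^ (1 - (n:ℝ)) = 2 / 2 ^ n := by
    rw [Real.rpow_sub two_pos, Real.rpow_one, Real.rpow_natCast]
  rw [h2n] at hdup
  have hdup3 : Real.Gamma ((n:ℝ)/2) * Real.Gamma (((n:ℝ)+1)/2) * 2 ^ n
      = 2 * Real.sqrt π * Real.Gamma n := by
    field_simp at hdup
    linarith [hdup]
  have hpi : Real.pi ^ (((n:ℝ)+1)/2) = Real.sqrt π ^ n * Real.sqrt π := by
    rw [Real.sqrt_eq_rpow, ← Real.rpow_natCast (π ^ (1/2:ℝ)) n, ← Real.rpow_mul Real.pi_pos.le,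
      ← Real.rpow_add Real.pi_pos]
    congr 1
    ring
  rw [hpi, hG1]
  have h2pow : (0:ℝ) < 2 ^ n := by positivity
  field_simp
  linear_combination hdup3

/-- `∫_{ℝⁿ} (α/(|x|²+α²))ⁿ dx = ω_n / 2ⁿ`, where
`ω_n = 2π^((n+1)/2)/Γ((n+1)/2)` is the volume of the round unit `n`-sphere;
in particular the integral is independent of `α`. -/
theorem bubble_critical_integral_eq
    (n : ℕ) (hn : 3 ≤ n) (α : ℝ) (hα : 0 < α) :
    (∫ x : EuclideanSpace ℝ (Fin n), (α / (‖x‖ ^ 2 + α ^ 2)) ^ n)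
      = (2 * Real.pi ^ (((n : ℝ) + 1) / 2) / Real.Gamma (((n : ℝ) + 1) / 2)) / 2 ^ n := by
  open Real Set in
  have hdim : Module.finrank ℝ (EuclideanSpace ℝ (Fin n)) = n := by
    simp [finrank_euclideanSpace]
  -- Step 1: reduce to α = 1 by scaling
  have step1 : (∫ x : EuclideanSpace ℝ (Fin n), (α / (‖x‖ ^ 2 + α ^ 2)) ^ n)
      = ∫ x : EuclideanSpace ℝ (Fin n), (1 / (‖x‖ ^ 2 + 1)) ^ n := by
    have hpt : ∀ x : EuclideanSpace ℝ (Fin n), (α / (‖x‖ ^ 2 + α ^ 2)) ^ n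
        = (α ^ n)⁻¹ * (1 / (‖α⁻¹ • x‖ ^ 2 + 1)) ^ n := by
      intro x
      have hnorm : ‖α⁻¹ • x‖ = α⁻¹ * ‖x‖ := by
        rw [norm_smul, Real.norm_eq_abs, abs_of_pos (inv_pos.2 hα)]
      rw [hnorm, ← inv_pow, ← mul_pow]
      congr 1
      have hD : ‖x‖ ^ 2 + α ^ 2 ≠ 0 := by positivity
      field_simp
    simp only [hpt]
    rw [MeasureTheory.integral_const_mul,
      MeasureTheory.Measure.integral_comp_inv_smul volume
        (fun x : EuclideanSpace ℝ (Fin n) => (1 / (‖x‖ ^ 2 + 1)) ^ n) α, hdim]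
    rw [abs_of_pos (by positivity), smul_eq_mul, ← mul_assoc, inv_mul_cancel₀ (by positivity),
      one_mul]
  -- Step 2: polar coordinates
  open Real Set in
  have step2 : (∫ x : EuclideanSpace ℝ (Fin n), (1 / (‖x‖ ^ 2 + 1)) ^ n)
      = (n : ℝ) * ((Real.sqrt π ^ n / Real.Gamma ((n:ℝ)/2 + 1)) *
          ∫ y in Ioi (0:ℝ), y ^ ((n:ℝ) - 1) * (1 + y ^ 2) ^ (-(n:ℝ))) := by
    haveI : Nonempty (Fin n) := ⟨⟨0, by omega⟩⟩
    haveI : Nontrivial (EuclideanSpace ℝ (Fin n)) := by infer_instance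
    have h := MeasureTheory.integral_fun_norm_addHaar (volume : Measure (EuclideanSpace ℝ (Fin n)))
      (fun r : ℝ => (1 / (r ^ 2 + 1)) ^ n)
    rw [hdim] at h
    rw [h]
    have hvol : (volume (Metric.ball (0 : EuclideanSpace ℝ (Fin n)) 1)).toReal
        = Real.sqrt π ^ n / Real.Gamma ((n:ℝ)/2 + 1) := by
      rw [EuclideanSpace.volume_ball]
      have hΓ : 0 < Real.Gamma (((Fintype.card (Fin n)):ℝ) / 2 + 1) :=
        Real.Gamma_pos_of_pos (by positivity)
      simp [Fintype.card_fin,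
        ENNReal.toReal_ofReal (by positivity : (0:ℝ) ≤ √π ^ n / Real.Gamma ((n:ℝ)/2+1))]
    rw [measureReal_def, hvol]
    have hrad : (∫ y in Ioi (0:ℝ), y ^ (n - 1) • (1 / (y ^ 2 + 1)) ^ n)
        = ∫ y in Ioi (0:ℝ), y ^ ((n:ℝ) - 1) * (1 + y ^ 2) ^ (-(n:ℝ)) := by
      refine setIntegral_congr_fun measurableSet_Ioi (fun y hy => ?_)
      have hy' : (0:ℝ) < y := hy
      have h1 : (y:ℝ) ^ (n - 1) = y ^ ((n:ℝ) - 1) := by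
        rw [← Real.rpow_natCast y (n - 1)]
        congr 1
        push_cast [Nat.cast_sub (by omega : 1 ≤ n)]
        ring
      have h2 : ((1:ℝ) / (y ^ 2 + 1)) ^ n = (1 + y ^ 2) ^ (-(n:ℝ)) := by
        rw [Real.rpow_neg (by positivity), Real.rpow_natCast, div_pow, one_pow, add_comm]
        simp
      rw [smul_eq_mul, h1, h2]
    rw [hrad, nsmul_eq_mul, smul_eq_mul]
  rw [step1, step2, bubble_radial_aux n hn]
  exact bubble_gamma_algebra n hn
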